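/- Let T be a bounded linear operator on a Banach space X. Then J_T^mix(0) = J_{T^n}^mix(0) for every positive integer n; that is, y ∈ X satisfies the property that there exists a sequence (x_k) with x_k → 0 and T^k x_k → y if and only if there exists a sequence (z_k) with z_k → 0 and (T^n)^k z_k → y. -/
import Mathlib


open Filter Topology

/-- The extended mixing limit set `J_T^mix(x)`: all `y` for which there exists a
sequence `(x_n)` with `x_n → x` and `T^n x_n → y`. -/
noncomputable def Jmix {X : Type*} [SeminormedAddCommGroup X] [NormedSpace ℂ X]
    (T : X →L[ℂ] X) (x : X) : Set X :=
  {y | ∃ u : ℕ → X, Tendsto u atTop (𝓝 x) ∧ Tendsto (fun n => (T ^ n) (u n)) atTop (𝓝 y)}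

/-- For every positive integer `n`, `J_T^mix(0) = J_{T^n}^mix(0)`. -/
theorem stmt16 {X : Type*} [NormedAddCommGroup X] [NormedSpace ℂ X] [CompleteSpace X]
    (T : X →L[ℂ] X) (n : ℕ) (hn : 0 < n) :
    Jmix T 0 = Jmix (T ^ n) 0 := by
  ext y
  simp only [Jmix, Set.mem_setOf_eq]
  constructor
  · rintro ⟨u, hu0, huy⟩
    have hcomp : Tendsto (fun k : ℕ => n * k) atTop atTop :=
      tendsto_atTop_mono (fun k => Nat.le_mul_of_pos_left k hn) tendsto_id
    refine ⟨fun k => u (n * k), hu0.comp hcomp, ?_⟩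
    have : (fun k => ((T ^ n) ^ k) (u (n * k)))
        = (fun m => (T ^ m) (u m)) ∘ (fun k : ℕ => n * k) := by
      funext k
      simp [Function.comp, ← pow_mul]
    rw [this]
    exact huy.comp hcomp
  · rintro ⟨z, hz0, hzy⟩
    set M := max 1 ‖T‖ with hMdef
    have hM1 : (1 : ℝ) ≤ M := le_max_left _ _
    have hlt : ∀ m : ℕ, m < n * (m / n + 1) := by
      intro m
      calc m = n * (m / n) + m % n := (Nat.div_add_mod m n).symm
        _ < n * (m / n) + n := Nat.add_lt_add_left (Nat.mod_lt m hn) _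
        _ = n * (m / n + 1) := by ring
    have hcomp : Tendsto (fun m : ℕ => m / n + 1) atTop atTop := by
      refine tendsto_atTop_atTop.2 fun b => ⟨n * b, fun m hm => ?_⟩
      have : b ≤ m / n := (Nat.le_div_iff_mul_le hn).2 (by rw [Nat.mul_comm]; exact hm)
      omega
    refine ⟨fun m => (T ^ (n * (m / n + 1) - m)) (z (m / n + 1)), ?_, ?_⟩
    · have hbound : ∀ m : ℕ, ‖(T ^ (n * (m / n + 1) - m)) (z (m / n + 1))‖
          ≤ M ^ n * ‖z (m / n + 1)‖ := by
        intro m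
        set j := n * (m / n + 1) - m with hj
        have hjn : j ≤ n := by
          have h1 : n * (m / n) ≤ m := Nat.mul_div_le m n
          have : n * (m / n + 1) = n * (m / n) + n := by ring
          omega
        calc ‖(T ^ j) (z (m / n + 1))‖ ≤ ‖T ^ j‖ * ‖z (m / n + 1)‖ :=
              (T ^ j).le_opNorm _
          _ ≤ M ^ n * ‖z (m / n + 1)‖ := by
              apply mul_le_mul_of_nonneg_right _ (norm_nonneg _)
              have hjpos : 0 < j := by have := hlt m; omega
              calc ‖T ^ j‖ ≤ ‖T‖ ^ j := norm_pow_le' T hjpos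
                _ ≤ M ^ j := pow_le_pow_left₀ (norm_nonneg T) (le_max_right _ _) j
                _ ≤ M ^ n := pow_le_pow_right₀ hM1 hjn
      have hz' : Tendsto (fun m : ℕ => ‖z (m / n + 1)‖) atTop (𝓝 0) :=
        tendsto_norm_zero.comp (hz0.comp hcomp)
      have hlim : Tendsto (fun m : ℕ => M ^ n * ‖z (m / n + 1)‖) atTop (𝓝 0) := by
        simpa using hz'.const_mul (M ^ n)
      exact squeeze_zero_norm hbound hlim
    · have : (fun m => (T ^ m) ((T ^ (n * (m / n + 1) - m)) (z (m / n + 1))))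
          = (fun k => ((T ^ n) ^ k) (z k)) ∘ (fun m : ℕ => m / n + 1) := by
        funext m
        have h1 : m ≤ n * (m / n + 1) := (hlt m).le
        have : (T ^ m) ((T ^ (n * (m / n + 1) - m)) (z (m / n + 1)))
            = (T ^ (m + (n * (m / n + 1) - m))) (z (m / n + 1)) := by
          rw [pow_add]; rfl
        rw [this, Nat.add_sub_cancel' h1]
        simp [Function.comp, pow_mul]
      rw [this]
      exact hzy.comp hcomp
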